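/- The out-forest dimension of a digraph equals the number of its basis bicomponents. -/

import Mathlib

open Finset

variable {n : ℕ}

/-- Kirchhoff (Laplacian) matrix of the weighted digraph whose arc `(j, i)`
has weight `a i j` (so `a i j` is the weight with which agent `i` accounts for `j`). -/
noncomputable def kirchhoff (a : Matrix (Fin n) (Fin n) ℝ) : Matrix (Fin n) (Fin n) ℝ :=
  Matrix.of fun i j => if i = j then ∑ k ∈ Finset.univ.erase i, a i k else -a i j

/-- `F` is a spanning diverging forest (out-forest) of the digraph with arcs
`u → v` present iff `a v u > 0`: every arc of `F` is an arc of the digraph,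
every vertex has in-degree at most one in `F`, and `F` has no directed cycles
(equivalently, no infinite directed walk). -/
def IsOutForest (a : Matrix (Fin n) (Fin n) ℝ) (F : Finset (Fin n × Fin n)) : Prop :=
  (∀ e ∈ F, 0 < a e.2 e.1) ∧
  (∀ u u' v : Fin n, (u, v) ∈ F → (u', v) ∈ F → u = u') ∧
  ¬ ∃ f : ℕ → Fin n, ∀ k, (f k, f (k + 1)) ∈ F

/-- Number of arcs of a maximum out-forest. -/
noncomputable def maxForestSize (a : Matrix (Fin n) (Fin n) ℝ) : ℕ :=
  sSup {k | ∃ F, IsOutForest a F ∧ F.card = k}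

/-- The out-forest dimension: the number of trees in any maximum out-forest. -/
noncomputable def outForestDim (a : Matrix (Fin n) (Fin n) ℝ) : ℕ :=
  n - maxForestSize a

open Classical in
/-- The set of maximum out-forests. -/
noncomputable def maxForests (a : Matrix (Fin n) (Fin n) ℝ) :
    Finset (Finset (Fin n × Fin n)) :=
  Finset.univ.filter fun F => IsOutForest a F ∧ F.card = maxForestSize a

/-- The weight of a forest: the product of its arc weights. -/
def forestWeight (a : Matrix (Fin n) (Fin n) ℝ) (F : Finset (Fin n × Fin n)) : ℝ :=
  ∏ e ∈ F, a e.2 e.1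

/-- In forest `F`, vertex `i` belongs to the tree diverging from (rooted at) `j`. -/
def InTreeRootedAt (F : Finset (Fin n × Fin n)) (j i : Fin n) : Prop :=
  (∀ u, (u, j) ∉ F) ∧ Relation.ReflTransGen (fun x y => (x, y) ∈ F) j i

open Classical in
/-- The normalized matrix of maximum out-forests. -/
noncomputable def barJ (a : Matrix (Fin n) (Fin n) ℝ) : Matrix (Fin n) (Fin n) ℝ :=
  Matrix.of fun i j =>
    (∑ F ∈ (maxForests a).filter (fun F => InTreeRootedAt F j i), forestWeight a F) /
    (∑ F ∈ maxForests a, forestWeight a F)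

/-- Reachability by directed paths (arc `u → v` present iff `a v u > 0`). -/
def Reach (a : Matrix (Fin n) (Fin n) ℝ) (u v : Fin n) : Prop :=
  Relation.ReflTransGen (fun x y => 0 < a y x) u v

/-- The strong component (bicomponent) of vertex `v`. -/
def strongClass (a : Matrix (Fin n) (Fin n) ℝ) (v : Fin n) : Set (Fin n) :=
  {u | Reach a u v ∧ Reach a v u}

/-- The set of strong components. -/
def strongClasses (a : Matrix (Fin n) (Fin n) ℝ) : Set (Set (Fin n)) :=
  {S | ∃ v, S = strongClass a v}

/-- Basis bicomponents: strong components with no arcs entering from outside. -/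
def basisClasses (a : Matrix (Fin n) (Fin n) ℝ) : Set (Set (Fin n)) :=
  {S | (∃ v, S = strongClass a v) ∧ ∀ u v, u ∉ S → v ∈ S → ¬ 0 < a v u}

/-- Weak reachability (underlying undirected graph). -/
def WeakReach (a : Matrix (Fin n) (Fin n) ℝ) (u v : Fin n) : Prop :=
  Relation.ReflTransGen (fun x y => 0 < a y x ∨ 0 < a x y) u v

/-- The set of weak components. -/
def weakClasses (a : Matrix (Fin n) (Fin n) ℝ) : Set (Set (Fin n)) :=
  {S | ∃ v, S = {u | WeakReach a u v}}


section Aux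

open Classical

variable (a : Matrix (Fin n) (Fin n) ℝ)

lemma strongClass_eq_of_mem {x v : Fin n} (h : x ∈ strongClass a v) :
    strongClass a x = strongClass a v := by
  obtain ⟨hxv, hvx⟩ := h
  ext u
  exact ⟨fun ⟨h1, h2⟩ => ⟨h1.trans hxv, hvx.trans h2⟩,
         fun ⟨h1, h2⟩ => ⟨h1.trans hvx, hxv.trans h2⟩⟩

lemma mem_strongClass_self (v : Fin n) : v ∈ strongClass a v :=
  ⟨Relation.ReflTransGen.refl, Relation.ReflTransGen.refl⟩

/-- Root set of a forest. -/
noncomputable def roots (F : Finset (Fin n × Fin n)) : Finset (Fin n) :=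
  Finset.univ.filter (fun v => ∀ u, (u, v) ∉ F)

/-- Canonical representatives of basis classes: the least vertex of each basis class. -/
noncomputable def repSet : Finset (Fin n) :=
  Finset.univ.filter (fun v => strongClass a v ∈ basisClasses a ∧
    ∀ u, u < v → strongClass a u ≠ strongClass a v)

lemma exists_maximal (v : Fin n) :
    ∃ u, Reach a u v ∧ ∀ w, Reach a w u → Reach a u w := by
  classical
  have hne : (Finset.univ.filter (fun u => Reach a u v)).Nonempty :=
    ⟨v, by simp [Reach]; exact Finset.mem_filter.mpr ⟨Finset.mem_univ _, Relation.ReflTransGen.refl⟩⟩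
  obtain ⟨u, hu, hmin⟩ := Finset.exists_min_image _
    (fun u => (Finset.univ.filter (fun w => Reach a w u)).card) hne
  simp only [Finset.mem_filter, Finset.mem_univ, true_and] at hu hmin
  refine ⟨u, hu, fun w hwu => ?_⟩
  have hsub : Finset.univ.filter (fun z => Reach a z w) ⊆
      Finset.univ.filter (fun z => Reach a z u) := by
    intro z hz
    simp only [Finset.mem_filter, Finset.mem_univ, true_and] at hz ⊢
    exact hz.trans hwu
  have hle := hmin w (hwu.trans hu)
  have heq := Finset.eq_of_subset_of_card_le hsub hle
  have : u ∈ Finset.univ.filter (fun z => Reach a z w) := by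
    rw [heq]; simp [Reach]; exact Finset.mem_filter.mpr ⟨Finset.mem_univ _, Relation.ReflTransGen.refl⟩
  simpa using this

lemma basis_of_maximal {u : Fin n} (hmax : ∀ w, Reach a w u → Reach a u w) :
    strongClass a u ∈ basisClasses a := by
  refine ⟨⟨u, rfl⟩, fun x y hx hy harc => ?_⟩
  have hxy : Reach a x y := Relation.ReflTransGen.single harc
  have hyu : Reach a y u := hy.1
  have hxu : Reach a x u := hxy.trans hyu
  have hux : Reach a u x := hmax x hxu
  exact hx ⟨hxu, hux⟩

lemma min_mem_repSet {u : Fin n} (hb : strongClass a u ∈ basisClasses a) :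
    ∃ m ∈ repSet a, strongClass a m = strongClass a u := by
  classical
  set T := Finset.univ.filter (fun x => strongClass a x = strongClass a u) with hT
  have hTne : T.Nonempty := ⟨u, by simp [hT]⟩
  refine ⟨T.min' hTne, ?_, ?_⟩
  · have hmem := T.min'_mem hTne
    simp only [hT, Finset.mem_filter, Finset.mem_univ, true_and] at hmem
    refine Finset.mem_filter.mpr ⟨Finset.mem_univ _, hmem ▸ hb, fun w hw hcls => ?_⟩
    have : w ∈ T := by
      simp only [hT, Finset.mem_filter, Finset.mem_univ, true_and]
      rw [hcls, hmem]
    exact absurd (T.min'_le w this) (not_le.mpr hw)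
  · have hmem := T.min'_mem hTne
    simp only [hT, Finset.mem_filter, Finset.mem_univ, true_and] at hmem
    exact hmem

lemma exists_rep_reach (v : Fin n) : ∃ u ∈ repSet a, Reach a u v := by
  obtain ⟨u, huv, hmax⟩ := exists_maximal a v
  obtain ⟨m, hm, hcls⟩ := min_mem_repSet a (basis_of_maximal a hmax)
  refine ⟨m, hm, ?_⟩
  have : u ∈ strongClass a m := hcls ▸ mem_strongClass_self a u
  exact this.2.trans huv

lemma card_repSet : (repSet a).card = (basisClasses a).ncard := by
  classical
  have hfin : (basisClasses a).Finite := Set.toFinite _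
  rw [Set.ncard_eq_toFinset_card' _]
  refine Finset.card_bij (fun v _ => strongClass a v) ?_ ?_ ?_
  · intro v hv
    simp only [repSet, Finset.mem_filter] at hv
    simpa using hv.2.1
  · intro v hv w hw hcls
    simp only [repSet, Finset.mem_filter] at hv hw
    by_contra hne
    rcases lt_or_gt_of_ne hne with h | h
    · exact hw.2.2 v h hcls
    · exact hv.2.2 w h hcls.symm
  · intro S hS
    simp only [Set.mem_toFinset] at hS
    obtain ⟨⟨w, hw⟩, hS2⟩ := id hS
    obtain ⟨m, hm, hcls⟩ := min_mem_repSet a (show strongClass a w ∈ basisClasses a from hw ▸ hS)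
    exact ⟨m, hm, show strongClass a m = S by rw [hcls, ← hw]⟩

lemma basis_has_root {F : Finset (Fin n × Fin n)} (hF : IsOutForest a F)
    {S : Set (Fin n)} (hS : S ∈ basisClasses a) :
    ∃ v, v ∈ S ∧ v ∈ roots F := by
  classical
  by_contra hno
  push_neg at hno
  obtain ⟨⟨v0, hv0⟩, hbar⟩ := hS
  have hall : ∀ v ∈ S, ∃ u, (u, v) ∈ F ∧ u ∈ S := by
    intro v hv
    have hnr := hno v hv
    simp only [roots, Finset.mem_filter, Finset.mem_univ, true_and, not_forall,
      not_not] at hnr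
    obtain ⟨u, hu⟩ := hnr
    refine ⟨u, hu, ?_⟩
    by_contra hus
    exact hbar u v hus hv (hF.1 _ hu)
  let pick : Fin n → Fin n := fun x =>
    if h : x ∈ S then Classical.choose (hall x h) else x
  let g : ℕ → Fin n := fun k => Nat.rec v0 (fun _ x => pick x) k
  have hgS : ∀ k, g k ∈ S := by
    intro k
    induction k with
    | zero => show v0 ∈ S; rw [hv0]; exact mem_strongClass_self a v0
    | succ k ih =>
      show pick (g k) ∈ S
      simp only [pick, dif_pos ih]
      exact (Classical.choose_spec (hall _ ih)).2
  have harc : ∀ k, (g (k + 1), g k) ∈ F := by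
    intro k
    show (pick (g k), g k) ∈ F
    simp only [pick, dif_pos (hgS k)]
    exact (Classical.choose_spec (hall _ (hgS k))).1
  have key : ∀ i j : ℕ, i < j → g i = g j → False := by
    intro i j hij heq
    set p := j - i with hp_def
    have hp : 0 < p := by omega
    apply hF.2.2
    refine ⟨fun m => g (j - m % p), fun m => ?_⟩
    show (g (j - m % p), g (j - (m + 1) % p)) ∈ F
    have hrp : m % p < p := Nat.mod_lt _ hp
    have hdm : p * (m / p) + m % p = m := Nat.div_add_mod m p
    have hm1 : (m + 1) % p = (m % p + 1) % p := by
      conv_lhs => rw [show m + 1 = (m % p + 1) + p * (m / p) by omega]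
      rw [Nat.add_mul_mod_self_left]
    by_cases hcase : m % p + 1 = p
    · have h0 : (m + 1) % p = 0 := by rw [hm1, hcase, Nat.mod_self]
      have h1 : j - m % p = i + 1 := by omega
      rw [h0, h1, Nat.sub_zero, ← heq]
      exact harc i
    · have h0 : (m + 1) % p = m % p + 1 := by
        rw [hm1, Nat.mod_eq_of_lt (by omega)]
      have h1 : j - m % p = (j - (m % p + 1)) + 1 := by omega
      rw [h0, h1]
      exact harc (j - (m % p + 1))
  obtain ⟨i, j, hne, hij⟩ := Finite.exists_ne_map_eq_of_infinite g
  rcases lt_or_gt_of_ne hne with h | h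
  · exact key i j h hij
  · exact key j i h hij.symm

lemma forest_card_eq {a : Matrix (Fin n) (Fin n) ℝ} {F : Finset (Fin n × Fin n)}
    (hF : IsOutForest a F) : F.card = n - (roots F).card := by
  classical
  have hinj : Set.InjOn Prod.snd (F : Set (Fin n × Fin n)) := by
    intro e he e' he' h
    have h1 : (e.1, e.2) ∈ F := by simpa using he
    have h2 : (e'.1, e.2) ∈ F := by rw [h]; simpa using he'
    have := hF.2.1 e.1 e'.1 e.2 h1 h2
    exact Prod.ext this h
  have himg : F.image Prod.snd = Finset.univ \ roots F := by
    ext v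
    simp only [Finset.mem_image, Finset.mem_sdiff, Finset.mem_univ, true_and,
      roots, Finset.mem_filter, not_forall, not_not]
    constructor
    · rintro ⟨e, he, rfl⟩
      exact ⟨e.1, by simpa using he⟩
    · rintro ⟨u, hu⟩
      exact ⟨(u, v), hu, rfl⟩
  rw [← Finset.card_image_of_injOn hinj, himg,
    Finset.card_sdiff_of_subset (Finset.subset_univ _)]
  simp

lemma forest_card_le' {F : Finset (Fin n × Fin n)} (hF : IsOutForest a F) :
    (basisClasses a).ncard ≤ (roots F).card := by
  classical
  rcases Nat.eq_zero_or_pos n with hn | hn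
  · subst hn
    have : basisClasses a = ∅ := by
      ext S
      simp only [basisClasses, Set.mem_setOf_eq, Set.mem_empty_iff_false, iff_false]
      rintro ⟨⟨v, -⟩, -⟩
      exact v.elim0
    simp [this]
  haveI : Inhabited (Fin n) := ⟨⟨0, hn⟩⟩
  have hex : ∀ S ∈ basisClasses a, ∃ v, v ∈ S ∧ v ∈ roots F :=
    fun S hS => basis_has_root a hF hS
  choose! r hr1 hr2 using hex
  rw [Set.ncard_eq_toFinset_card' _]
  apply Finset.card_le_card_of_injOn r
  · intro S hS
    exact hr2 S (by simpa using hS)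
  · intro S hS S' hS' heq
    have hS1 : S ∈ basisClasses a := by simpa using hS
    have hS1' : S' ∈ basisClasses a := by simpa using hS'
    obtain ⟨v, hv⟩ := hS1.1
    obtain ⟨v', hv'⟩ := hS1'.1
    have e1 : strongClass a (r S) = strongClass a v :=
      strongClass_eq_of_mem a (hv ▸ hr1 S hS1)
    have e1' : strongClass a (r S') = strongClass a v' :=
      strongClass_eq_of_mem a (hv' ▸ hr1 S' hS1')
    rw [hv, hv', ← e1, ← e1', heq]

lemma forest_card_le {F : Finset (Fin n × Fin n)} (hF : IsOutForest a F) :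
    F.card ≤ n - (basisClasses a).ncard := by
  rw [forest_card_eq hF]
  exact Nat.sub_le_sub_left (forest_card_le' a hF) n

/-- `v` is reachable from the representative set in at most `k` steps. -/
def reachIn : ℕ → Fin n → Prop
  | 0, v => v ∈ repSet a
  | (k + 1), v => reachIn k v ∨ ∃ u, reachIn k u ∧ 0 < a v u

lemma reachIn_exists (v : Fin n) : ∃ k, reachIn a k v := by
  obtain ⟨u, hu, huv⟩ := exists_rep_reach a v
  induction huv with
  | refl =>
    exact ⟨0, hu⟩
  | tail hab hbc ih =>
    obtain ⟨k, hk⟩ := ih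
    exact ⟨k + 1, Or.inr ⟨_, hk, hbc⟩⟩

/-- Distance level from the representative set. -/
noncomputable def dlev (v : Fin n) : ℕ := Nat.find (reachIn_exists a v)

lemma dlev_zero_iff (v : Fin n) : dlev a v = 0 ↔ v ∈ repSet a := by
  rw [dlev, Nat.find_eq_zero]
  exact Iff.rfl

lemma exists_parent {v : Fin n} (hv : dlev a v ≠ 0) :
    ∃ u, 0 < a v u ∧ dlev a u < dlev a v := by
  obtain ⟨m, hm⟩ := Nat.exists_eq_succ_of_ne_zero hv
  have h1 : reachIn a (dlev a v) v := Nat.find_spec (reachIn_exists a v)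
  rw [hm] at h1
  have h2 : ¬ reachIn a m v :=
    Nat.find_min (reachIn_exists a v) (show m < dlev a v by rw [hm]; omega)
  rcases h1 with h1 | ⟨u, hu, harc⟩
  · exact absurd h1 h2
  · refine ⟨u, harc, lt_of_le_of_lt (Nat.find_min' (reachIn_exists a u) hu) ?_⟩
    rw [hm]
    omega

lemma exists_max_forest :
    ∃ F, IsOutForest a F ∧ F.card = n - (basisClasses a).ncard := by
  classical
  have hex : ∀ v : Fin n, v ∉ repSet a → ∃ u, 0 < a v u ∧ dlev a u < dlev a v :=
    fun v hv => exists_parent a (fun h => hv ((dlev_zero_iff a v).mp h))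
  let par : Fin n → Fin n := fun v =>
    if h : v ∉ repSet a then Classical.choose (hex v h) else v
  have hpar : ∀ v (h : v ∉ repSet a), 0 < a v (par v) ∧ dlev a (par v) < dlev a v := by
    intro v h
    simp only [par, dif_pos h]
    exact Classical.choose_spec (hex v h)
  refine ⟨(Finset.univ.filter (fun v => v ∉ repSet a)).image (fun v => (par v, v)),
    ⟨?_, ?_, ?_⟩, ?_⟩
  · rintro e he
    simp only [Finset.mem_image, Finset.mem_filter, Finset.mem_univ, true_and] at he
    obtain ⟨v, hv, rfl⟩ := he
    exact (hpar v hv).1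
  · intro u u' v hu hu'
    simp only [Finset.mem_image, Finset.mem_filter, Finset.mem_univ, true_and,
      Prod.mk.injEq] at hu hu'
    obtain ⟨w, hw, hw1, rfl⟩ := hu
    obtain ⟨w', hw', hw1', hww⟩ := hu'
    subst hww
    rw [← hw1, ← hw1']
  · rintro ⟨f, hf⟩
    have hlt : ∀ k, dlev a (f k) < dlev a (f (k + 1)) := by
      intro k
      have := hf k
      simp only [Finset.mem_image, Finset.mem_filter, Finset.mem_univ, true_and,
        Prod.mk.injEq] at this
      obtain ⟨w, hw, hw1, hw2⟩ := this
      rw [← hw2, ← hw1]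
      exact (hpar w hw).2
    have hmono : StrictMono (fun k => dlev a (f k)) := strictMono_nat_of_lt_succ hlt
    obtain ⟨i, j, hne, hij⟩ := Finite.exists_ne_map_eq_of_infinite f
    exact hne (hmono.injective (by rw [hij]))
  · rw [Finset.card_image_of_injOn (fun v _ w _ h => (Prod.mk.injEq _ _ _ _).mp h |>.2)]
    have : Finset.univ.filter (fun v => v ∉ repSet a) = Finset.univ \ repSet a := by
      ext v
      simp
    rw [this, Finset.card_sdiff_of_subset (Finset.subset_univ _), card_repSet]
    simp

end Aux

/-- The out-forest dimension of a digraph equals the number of its basis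
bicomponents. -/
theorem outForestDim_eq_card_basisClasses {n : ℕ} (a : Matrix (Fin n) (Fin n) ℝ)
    (hnn : ∀ i j, 0 ≤ a i j) :
    outForestDim a = (basisClasses a).ncard := by
  classical
  have d_le : (basisClasses a).ncard ≤ n := by
    rw [← card_repSet a]
    exact (Finset.card_le_card (Finset.subset_univ _)).trans (by simp)
  have hmax : maxForestSize a = n - (basisClasses a).ncard := by
    obtain ⟨F, hF, hcard⟩ := exists_max_forest a
    apply le_antisymm
    · exact csSup_le ⟨F.card, F, hF, rfl⟩ (fun k ⟨G, hG, hk⟩ => hk ▸ forest_card_le a hG)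
    · exact le_csSup ⟨n - (basisClasses a).ncard,
        fun k ⟨G, hG, hk⟩ => hk ▸ forest_card_le a hG⟩ ⟨F, hF, hcard⟩
  rw [outForestDim, hmax, Nat.sub_sub_self d_le]
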